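/- Consider n groups evolving on [t*, T) under piecewise-constant payoffs over subintervals t* = t_0 < t_1 < ⋯ < t_s = T, with continuous unvaccinated proportions x_k : [t*,T) → ℝ satisfying on each open subinterval x_k′(t) = −κ 1(c_k(t_{j−1}) > 0) x_k(t) for rationalist groups k and x_k′(t) = −κ c_k(t_{j−1}) 1(c_k(t_{j−1}) > 0) y(t) x_k(t) for imitative groups k, where y(t) = 1 − Σ_{q=1}^n x_q(t). For t ∈ [t*,T) define η_k(t) = x-free closed-form ratios: η_k(t) = exp(−κ Σ_j (t_j − t_{j−1}) 1(c_k(t_{j−1})>0) − κ (t − t_{q(t)}) 1(c_k(t_{q(t)})>0)) for rationalist k, and η_k(t) = exp(−κ Σ_j c_k(t_{j−1}) 1(c_k(t_{j−1})>0) ∫_{t_{j−1}}^{t_j} y(τ)dτ − κ c_k(t_{q(t)}) 1(c_k(t_{q(t)})>0) ∫_{t_{q(t)}}^{t} y(τ)dτ) for imitative k, where q(t) = max{j : t ≥ t_j} and the sums run over completed subintervals before t. Let t̃_1,…,t̃_m ∈ [t*,T) with m ≥ n and let A be the m×n matrix with entries A_{ik} = η_k(t̃_i). Then A · (x_1(t*),…,x_n(t*))ᵀ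 = (1 − y(t̃_1),…,1 − y(t̃_m))ᵀ, and if A has rank n, then (x_1(t*),…,x_n(t*)) is the unique vector z ∈ ℝ^n with A z = (1 − y(t̃_1),…,1 − y(t̃_m))ᵀ; consequently the proportions of unvaccinated individuals in each group at the vaccine abundance time t* are globally identifiable from the output y. -/

import Mathlib

/-- The indicator `1(z > 0)` as a real number. -/
noncomputable def indR (z : ℝ) : ℝ := if 0 < z then 1 else 0

open Classical in
/-- `q(t) = max{j ≤ s : t_j ≤ t}`, the index of the subinterval containing `t`. -/
noncomputable def qfun (tt : ℕ → ℝ) (s : ℕ) (t : ℝ) : ℕ :=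
  Nat.findGreatest (fun j => tt j ≤ t) s

/-- The closed-form ratio `η_k(t) = x_k(t)/x_k(t*)` for a rationalist group with
piecewise-constant payoffs `cg j` on `[t_j, t_{j+1})`. -/
noncomputable def etaR (κ : ℝ) (tt : ℕ → ℝ) (s : ℕ) (cg : ℕ → ℝ) (t : ℝ) : ℝ :=
  Real.exp (-κ * (∑ j ∈ Finset.Icc 1 (qfun tt s t),
      (tt j - tt (j - 1)) * indR (cg (j - 1))) -
    κ * (t - tt (qfun tt s t)) * indR (cg (qfun tt s t)))

/-- The closed-form ratio `η_k(t) = x_k(t)/x_k(t*)` for an imitative group with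
piecewise-constant payoffs `cg j` on `[t_j, t_{j+1})` and output `y`. -/
noncomputable def etaM (κ : ℝ) (tt : ℕ → ℝ) (s : ℕ) (cg : ℕ → ℝ) (y : ℝ → ℝ) (t : ℝ) : ℝ :=
  Real.exp (-κ * (∑ j ∈ Finset.Icc 1 (qfun tt s t),
      cg (j - 1) * indR (cg (j - 1)) * ∫ τ in (tt (j - 1))..(tt j), y τ) -
    κ * cg (qfun tt s t) * indR (cg (qfun tt s t)) * ∫ τ in (tt (qfun tt s t))..t, y τ)

open Set MeasureTheory intervalIntegral


lemma ttmono (tt : ℕ → ℝ) (s : ℕ) (hmono : ∀ j < s, tt j < tt (j + 1)) :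
    ∀ i j, i ≤ j → j ≤ s → tt i ≤ tt j := by
  intro i j hij hjs
  induction j with
  | zero => interval_cases i; rfl
  | succ j ih =>
    rcases Nat.lt_or_ge i (j+1) with h | h
    · exact (ih (Nat.lt_succ_iff.mp h) (le_trans (Nat.le_succ j) hjs)).trans
        (hmono j (lt_of_lt_of_le (Nat.lt_succ_self j) hjs)).le
    · rw [le_antisymm hij h]

lemma ttstrict (tt : ℕ → ℝ) (s : ℕ) (hmono : ∀ j < s, tt j < tt (j + 1)) :
    ∀ i j, i < j → j ≤ s → tt i < tt j := by
  intro i j hij hjs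
  have h1 : tt i < tt (i+1) := hmono i (lt_of_lt_of_le hij hjs)
  exact lt_of_lt_of_le h1 (ttmono tt s hmono (i+1) j hij hjs)

lemma const_of_deriv_zero {h : ℝ → ℝ} {a b : ℝ} (hab : a ≤ b)
    (hc : ContinuousOn h (Icc a b))
    (hd : ∀ t ∈ Ioo a b, HasDerivAt h 0 t) : h b = h a := by
  have hdiff : DifferentiableOn ℝ h (interior (Icc a b)) := by
    rw [interior_Icc]
    exact fun t ht => ((hd t ht).differentiableAt).differentiableWithinAt
  have h0 : ∀ t ∈ interior (Icc a b), deriv h t = 0 := by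
    rw [interior_Icc]; exact fun t ht => (hd t ht).deriv
  have hmono := monotoneOn_of_deriv_nonneg (convex_Icc a b) hc hdiff (fun t ht => (h0 t ht).ge)
  have hanti := antitoneOn_of_deriv_nonpos (convex_Icc a b) hc hdiff (fun t ht => (h0 t ht).le)
  exact le_antisymm (hanti (left_mem_Icc.2 hab) (right_mem_Icc.2 hab) hab)
    (hmono (left_mem_Icc.2 hab) (right_mem_Icc.2 hab) hab)

lemma ode_solution {x G g : ℝ → ℝ} {a b : ℝ} (hab : a ≤ b)
    (hx : ContinuousOn x (Icc a b)) (hG : ContinuousOn G (Icc a b))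
    (hxd : ∀ t ∈ Ioo a b, HasDerivAt x (g t * x t) t)
    (hGd : ∀ t ∈ Ioo a b, HasDerivAt G (g t) t) :
    x b = Real.exp (G b - G a) * x a := by
  have hconst : x b * Real.exp (-(G b)) = x a * Real.exp (-(G a)) := by
    have := const_of_deriv_zero (h := fun t => x t * Real.exp (-(G t))) hab
      (hx.mul ((hG.neg).rexp))
      (fun t ht => by
        have hd := (hxd t ht).fun_mul (((hGd t ht).fun_neg).exp)
        refine hd.congr_deriv ?_
        ring)
    simpa using this
  have : x b = (x a * Real.exp (-(G a))) * Real.exp (G b) := by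
    rw [← hconst, mul_assoc, ← Real.exp_add]; simp
  rw [this, Real.exp_sub, Real.exp_neg]
  field_simp

lemma step_lemma (tt : ℕ → ℝ) (s : ℕ) (hmono : ∀ j < s, tt j < tt (j + 1))
    (ρ : ℕ → ℝ) (w : ℝ → ℝ) (hw : ContinuousOn w (Ico (tt 0) (tt s)))
    (x : ℝ → ℝ) (hxc : ContinuousOn x (Ico (tt 0) (tt s)))
    (j : ℕ) (hjs : j < s)
    (hxd : ∀ t ∈ Ioo (tt j) (tt (j + 1)), HasDerivAt x (ρ j * w t * x t) t)
    (b : ℝ) (hab : tt j ≤ b) (hbj : b ≤ tt (j + 1)) (hbs : b < tt s) :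
    x b = Real.exp (ρ j * ∫ τ in (tt j)..b, w τ) * x (tt j) := by
  set a := tt j with ha
  have hsub : Icc a b ⊆ Ico (tt 0) (tt s) := by
    intro τ hτ
    exact ⟨le_trans (ttmono tt s hmono 0 j (Nat.zero_le j) hjs.le) hτ.1,
      lt_of_le_of_lt hτ.2 hbs⟩
  have hsubo : Ioo a b ⊆ Ioo (tt 0) (tt s) := fun τ hτ =>
    ⟨lt_of_le_of_lt (ttmono tt s hmono 0 j (Nat.zero_le j) hjs.le) hτ.1,
      lt_trans hτ.2 hbs⟩
  have hwo : ContinuousOn w (Ioo (tt 0) (tt s)) := hw.mono Ioo_subset_Ico_self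
  have key := ode_solution (x := x) (G := fun τ => ρ j * ∫ σ in a..τ, w σ)
    (g := fun τ => ρ j * w τ) hab
    (hxc.mono hsub)
    (by
      apply ContinuousOn.mul continuousOn_const
      have hInt : IntegrableOn w (uIcc a b) := by
        rw [uIcc_of_le hab]
        exact (hw.mono hsub).integrableOn_Icc
      have := intervalIntegral.continuousOn_primitive_interval (f := w) (μ := volume) hInt
      rw [uIcc_of_le hab] at this
      exact this)
    (fun t ht => hxd t ⟨ht.1, lt_of_lt_of_le ht.2 hbj⟩)
    (fun t ht => by
      have hts : t ∈ Ioo (tt 0) (tt s) := hsubo ht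
      have hint : IntervalIntegrable w volume a t := by
        apply ContinuousOn.intervalIntegrable
        rw [uIcc_of_le ht.1.le]
        exact hw.mono (fun τ hτ => hsub ⟨hτ.1, hτ.2.trans ht.2.le⟩)
      have hmeas := ContinuousOn.stronglyMeasurableAtFilter (μ := volume) isOpen_Ioo hwo t hts
      have hcont : ContinuousAt w t := hwo.continuousAt (Ioo_mem_nhds hts.1 hts.2)
      exact (intervalIntegral.integral_hasDerivAt_right hint hmeas hcont).const_mul (ρ j))
  rw [key]
  simp

lemma key_lemma (tt : ℕ → ℝ) (s : ℕ) (hmono : ∀ j < s, tt j < tt (j + 1))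
    (ρ : ℕ → ℝ) (w : ℝ → ℝ) (hw : ContinuousOn w (Ico (tt 0) (tt s)))
    (x : ℝ → ℝ) (hxc : ContinuousOn x (Ico (tt 0) (tt s)))
    (hxd : ∀ j, 1 ≤ j → j ≤ s → ∀ t ∈ Ioo (tt (j - 1)) (tt j),
      HasDerivAt x (ρ (j - 1) * w t * x t) t)
    (t : ℝ) (ht : t ∈ Ico (tt 0) (tt s)) :
    x t = Real.exp ((∑ j ∈ Finset.Icc 1 (qfun tt s t),
        ρ (j - 1) * ∫ τ in (tt (j - 1))..(tt j), w τ)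
      + ρ (qfun tt s t) * ∫ τ in (tt (qfun tt s t))..t, w τ) * x (tt 0) := by
  classical
  set Q := qfun tt s t with hQ
  have hQle : Q ≤ s := Nat.findGreatest_le (P := fun j => tt j ≤ t) s
  have hPQ : tt Q ≤ t := Nat.findGreatest_spec (P := fun j => tt j ≤ t) (Nat.zero_le s) ht.1
  have hQs : Q < s := by
    rcases lt_or_eq_of_le hQle with h | h
    · exact h
    · exact absurd (h ▸ hPQ) (not_le.mpr ht.2)
  have hlt : t < tt (Q + 1) := by
    have h2 : ¬ (tt (Q + 1) ≤ t) :=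
      Nat.findGreatest_is_greatest (P := fun j => tt j ≤ t) (n := s) (k := Q + 1)
        (Nat.lt_succ_self Q) hQs
    exact not_le.mp h2
  have knot : ∀ j, j < s → x (tt j) =
      Real.exp (∑ i ∈ Finset.Icc 1 j, ρ (i - 1) * ∫ τ in (tt (i - 1))..(tt i), w τ)
        * x (tt 0) := by
    intro j
    induction j with
    | zero => intro _; simp
    | succ j ih =>
      intro hjs
      have hj : j < s := Nat.lt_of_succ_lt hjs
      have hstep := step_lemma tt s hmono ρ w hw x hxc j hj
        (fun u hu => hxd (j + 1) (Nat.succ_le_succ (Nat.zero_le j)) hjs.le u hu)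
        (tt (j + 1)) (hmono j hj).le le_rfl (ttstrict tt s hmono (j + 1) s hjs le_rfl)
      rw [hstep, ih hj, Finset.sum_Icc_succ_top (Nat.succ_le_succ (Nat.zero_le j)),
        ← mul_assoc, ← Real.exp_add]
      congr 1
      simp [add_comm]
  have hstep := step_lemma tt s hmono ρ w hw x hxc Q hQs
    (fun u hu => hxd (Q + 1) (Nat.succ_le_succ (Nat.zero_le Q)) hQs u hu)
    t hPQ hlt.le ht.2
  rw [hstep, knot Q hQs, ← mul_assoc, ← Real.exp_add, add_comm]

/-- During the vaccine-surplus period, the matrix `A` with entries `η_k(t̃_i)` satisfies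
`A (x_1(t*),…,x_n(t*))ᵀ = (1 − y(t̃_1),…,1 − y(t̃_m))ᵀ`; if moreover `A` has rank `n`, then
`(x_1(t*),…,x_n(t*))` is the unique solution of this linear system, i.e. the proportions
of unvaccinated individuals in each group at the vaccine abundance time `t* = t_0` are
globally identifiable from the output `y = 1 − Σ_q x_q`. -/
theorem stmt_16 (n s m : ℕ) (hn : 1 ≤ n) (hs : 1 ≤ s) (hm : n ≤ m)
    (R M : Finset (Fin n)) (hpart : Disjoint R M ∧ R ∪ M = Finset.univ)
    (κ : ℝ) (tt : ℕ → ℝ) (hmono : ∀ j < s, tt j < tt (j + 1))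
    (c : Fin n → ℕ → ℝ)
    (x : Fin n → ℝ → ℝ)
    (hxc : ∀ k, ContinuousOn (x k) (Set.Ico (tt 0) (tt s)))
    (hR : ∀ k ∈ R, ∀ j ∈ Finset.Icc 1 s, ∀ t ∈ Set.Ioo (tt (j - 1)) (tt j),
      HasDerivAt (x k) (-κ * indR (c k (j - 1)) * x k t) t)
    (hM : ∀ k ∈ M, ∀ j ∈ Finset.Icc 1 s, ∀ t ∈ Set.Ioo (tt (j - 1)) (tt j),
      HasDerivAt (x k)
        (-κ * c k (j - 1) * indR (c k (j - 1)) * (1 - ∑ q, x q t) * x k t) t)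
    (ttil : Fin m → ℝ) (httil : ∀ i, ttil i ∈ Set.Ico (tt 0) (tt s))
    (A : Matrix (Fin m) (Fin n) ℝ)
    (hA : ∀ i k, A i k =
      if k ∈ R then etaR κ tt s (c k) (ttil i)
      else etaM κ tt s (c k) (fun τ => 1 - ∑ q, x q τ) (ttil i)) :
    (A.mulVec (fun k => x k (tt 0)) = fun i => 1 - (1 - ∑ q, x q (ttil i)))
    ∧ (A.rank = n → ∀ z : Fin n → ℝ,
        A.mulVec z = (fun i => 1 - (1 - ∑ q, x q (ttil i))) →
        z = fun k => x k (tt 0)) := by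
  classical
  obtain ⟨hdisj, huniv⟩ := hpart
  have hycont : ContinuousOn (fun τ => 1 - ∑ q, x q τ) (Set.Ico (tt 0) (tt s)) :=
    ContinuousOn.sub continuousOn_const (continuousOn_finset_sum _ (fun k _ => hxc k))
  have hxeq : ∀ (k : Fin n) (t : ℝ), t ∈ Set.Ico (tt 0) (tt s) →
      x k t = (if k ∈ R then etaR κ tt s (c k) t
        else etaM κ tt s (c k) (fun τ => 1 - ∑ q, x q τ) t) * x k (tt 0) := by
    intro k t ht
    by_cases hk : k ∈ R
    · rw [if_pos hk]
      have h := key_lemma tt s hmono (fun j => -κ * indR (c k j)) (fun _ => (1 : ℝ))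
        continuousOn_const (x k) (hxc k)
        (fun j hj1 hjs u hu => by
          have h1 := hR k hk j (Finset.mem_Icc.mpr ⟨hj1, hjs⟩) u hu
          convert h1 using 1 <;> ring) t ht
      rw [h]
      unfold etaR
      congr 2
      simp only [intervalIntegral.integral_const, smul_eq_mul, mul_one]
      rw [Finset.mul_sum, sub_eq_add_neg]
      congr 1
      · exact Finset.sum_congr rfl fun j _ => by ring
      · ring
    · have hk' : k ∈ M := by
        have : k ∈ R ∪ M := huniv ▸ Finset.mem_univ k
        simpa [Finset.mem_union, hk] using this
      rw [if_neg hk]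
      have h := key_lemma tt s hmono (fun j => -κ * c k j * indR (c k j))
        (fun τ => 1 - ∑ q, x q τ) hycont (x k) (hxc k)
        (fun j hj1 hjs u hu => by
          have h1 := hM k hk' j (Finset.mem_Icc.mpr ⟨hj1, hjs⟩) u hu
          convert h1 using 1 <;> ring) t ht
      rw [h]
      unfold etaM
      congr 2
      simp only
      rw [Finset.mul_sum, sub_eq_add_neg]
      congr 1
      · exact Finset.sum_congr rfl fun j _ => by ring
      · ring
  have part1 : A.mulVec (fun k => x k (tt 0)) = fun i => 1 - (1 - ∑ q, x q (ttil i)) := by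
    funext i
    simp only [Matrix.mulVec, dotProduct, hA]
    rw [Finset.sum_congr rfl (fun k _ => (hxeq k (ttil i) (httil i)).symm), sub_sub_cancel]
  refine ⟨part1, fun hrank z hz => ?_⟩
  have hrank' : Module.finrank ℝ (LinearMap.range A.mulVecLin) = n := hrank
  have hadd := LinearMap.finrank_range_add_finrank_ker A.mulVecLin
  rw [hrank', Module.finrank_fin_fun] at hadd
  have hker : LinearMap.ker A.mulVecLin = ⊥ :=
    Submodule.finrank_eq_zero.mp (by omega)
  have hinj : Function.Injective A.mulVec := by
    intro u v huv
    exact LinearMap.ker_eq_bot.mp hker (by simpa [Matrix.mulVecLin_apply] using huv)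
  exact hinj (by rw [hz, part1])
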